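/- If 1/2 < H < 1, then the sequence ρ_k is strictly convex: ρ_{k-1} - ρ_k > ρ_k - ρ_{k+1} for all k ≥ 1. -/

import Mathlib

open Set Real

private lemma hasDerivAt_shift_rpow (p c : ℝ) {x : ℝ} (hx : x + c ≠ 0) :
    HasDerivAt (fun y : ℝ => (y + c) ^ p) (p * (x + c) ^ (p - 1)) x := by
  have h := (Real.hasDerivAt_rpow_const (p := p) (x := x + c)
      (Or.inl hx)).comp x ((hasDerivAt_id x).add_const c)
  exact (by simpa using h : HasDerivAt ((fun x => x ^ p) ∘ fun x => x + c) (p * (x + c) ^ (p - 1)) x)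

private lemma hasDerivAt_G (p : ℝ) {x : ℝ} (hx : 1 < x) :
    HasDerivAt (fun y : ℝ => (y + 1) ^ p - 2 * y ^ p + (y - 1) ^ p)
      (p * (x + 1) ^ (p - 1) - 2 * (p * x ^ (p - 1)) + p * (x - 1) ^ (p - 1)) x := by
  have h1 := hasDerivAt_shift_rpow p 1 (x := x) (by linarith)
  have h2 : HasDerivAt (fun y : ℝ => 2 * y ^ p) (2 * (p * x ^ (p - 1))) x :=
    (Real.hasDerivAt_rpow_const (Or.inl (by positivity))).const_mul 2
  have h3 := hasDerivAt_shift_rpow p (-1) (x := x) (by intro h; linarith)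
  have h := (h1.sub h2).add h3
  simp only [← sub_eq_add_neg] at h
  exact h

private lemma deriv2_G {p : ℝ} {x : ℝ} (hx : 1 < x) :
    deriv (deriv (fun y : ℝ => (y + 1) ^ p - 2 * y ^ p + (y - 1) ^ p)) x
      = p * ((p - 1) * (x + 1) ^ (p - 2)) - 2 * (p * ((p - 1) * x ^ (p - 2)))
        + p * ((p - 1) * (x - 1) ^ (p - 2)) := by
  have hev : deriv (fun y : ℝ => (y + 1) ^ p - 2 * y ^ p + (y - 1) ^ p)
      =ᶠ[nhds x] fun y : ℝ =>
        p * (y + 1) ^ (p - 1) - 2 * (p * y ^ (p - 1)) + p * (y - 1) ^ (p - 1) := by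
    filter_upwards [Ioi_mem_nhds hx] with y hy
    exact (hasDerivAt_G p hy).deriv
  rw [hev.deriv_eq]
  have h1 : HasDerivAt (fun y : ℝ => p * (y + 1) ^ (p - 1))
      (p * ((p - 1) * (x + 1) ^ (p - 1 - 1))) x :=
    (hasDerivAt_shift_rpow (p - 1) 1 (by linarith)).const_mul p
  have h2 : HasDerivAt (fun y : ℝ => 2 * (p * y ^ (p - 1)))
      (2 * (p * ((p - 1) * x ^ (p - 1 - 1)))) x :=
    ((Real.hasDerivAt_rpow_const (p := p - 1)
      (Or.inl (by positivity))).const_mul p).const_mul 2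
  have h3 : HasDerivAt (fun y : ℝ => p * (y + -1) ^ (p - 1))
      (p * ((p - 1) * (x + -1) ^ (p - 1 - 1))) x :=
    (hasDerivAt_shift_rpow (p - 1) (-1) (by intro h; linarith)).const_mul p
  have h3' : HasDerivAt (fun y : ℝ => p * (y - 1) ^ (p - 1))
      (p * ((p - 1) * (x - 1) ^ (p - 1 - 1))) x := by
    simp only [← sub_eq_add_neg] at h3
    exact h3
  have h := ((h1.sub h2).add h3').deriv
  refine Eq.trans h ?_
  norm_num [show p - 1 - 1 = p - 2 by ring]

private lemma strictConvexOn_rpow_neg {q : ℝ} (hq : q < 0) :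
    StrictConvexOn ℝ (Set.Ioi (0 : ℝ)) (fun x : ℝ => x ^ q) := by
  apply strictConvexOn_of_deriv2_pos' (convex_Ioi 0)
  · intro x hx
    exact (Real.continuousAt_rpow_const x q (Or.inl (ne_of_gt hx))).continuousWithinAt
  · intro x hx
    rw [mem_Ioi] at hx
    have hev : deriv (fun y : ℝ => y ^ q) =ᶠ[nhds x] fun y : ℝ => q * y ^ (q - 1) := by
      filter_upwards [Ioi_mem_nhds hx] with y hy
      exact (Real.hasDerivAt_rpow_const (Or.inl (ne_of_gt hy))).deriv
    have h2 : deriv (deriv (fun y : ℝ => y ^ q)) x = q * ((q - 1) * x ^ (q - 1 - 1)) := by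
      rw [hev.deriv_eq]
      exact ((Real.hasDerivAt_rpow_const (p := q - 1)
        (Or.inl (ne_of_gt hx))).const_mul q).deriv
    show (0:ℝ) < deriv (deriv (fun y : ℝ => y ^ q)) x
    rw [h2]
    have hpos : (0 : ℝ) < x ^ (q - 1 - 1) := Real.rpow_pos_of_pos hx _
    have hqq : (0:ℝ) < q * (q - 1) := mul_pos_of_neg_of_neg hq (by linarith)
    rw [← mul_assoc]
    exact mul_pos hqq hpos

private lemma strictConvexOn_G {a : ℝ} (ha1 : 1 < a) (ha2 : a < 2) :
    StrictConvexOn ℝ (Set.Ici (1 : ℝ))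
      (fun y : ℝ => (y + 1) ^ a - 2 * y ^ a + (y - 1) ^ a) := by
  apply strictConvexOn_of_deriv2_pos (convex_Ici 1)
  · have hc : Continuous fun y : ℝ => y ^ a :=
      Real.continuous_rpow_const (by linarith)
    exact (((hc.comp (continuous_id.add continuous_const)).sub
      (continuous_const.mul hc)).add (hc.comp (continuous_id.sub continuous_const))).continuousOn
  · intro x hx
    rw [interior_Ici, mem_Ioi] at hx
    show (0:ℝ) < deriv (deriv (fun y : ℝ => (y + 1) ^ a - 2 * y ^ a + (y - 1) ^ a)) x
    rw [deriv2_G hx]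
    -- strict convexity of t ↦ t ^ (a - 2) gives the mid-point inequality
    have hconv := strictConvexOn_rpow_neg (q := a - 2) (by linarith)
    have hmid := hconv.2 (show x - 1 ∈ Set.Ioi (0 : ℝ) by simp; linarith)
      (show x + 1 ∈ Set.Ioi (0 : ℝ) by simp; linarith)
      (show x - 1 ≠ x + 1 by intro h; linarith)
      (by norm_num : (0 : ℝ) < 1 / 2) (by norm_num : (0 : ℝ) < 1 / 2) (by norm_num)
    simp only [smul_eq_mul] at hmid
    rw [show (1 / 2 : ℝ) * (x - 1) + 1 / 2 * (x + 1) = x by ring] at hmid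
    have ha : 0 < a * (a - 1) := by nlinarith
    nlinarith [hmid]

private lemma key1 {a : ℝ} (ha1 : 1 < a) (ha2 : a < 2) :
    4 * (2 : ℝ) ^ a < 7 + (3 : ℝ) ^ a := by
  set t : ℝ := 2 - a with ht_def
  have ht : 0 < t := by simp [ht_def]; linarith
  have h2t : (0 : ℝ) < (2 : ℝ) ^ t := Real.rpow_pos_of_pos (by norm_num) _
  have h3t : (0 : ℝ) < (3 : ℝ) ^ t := Real.rpow_pos_of_pos (by norm_num) _
  have h2a : (2 : ℝ) ^ a = 4 / 2 ^ t := by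
    rw [show a = 2 - t by ring, Real.rpow_sub (by norm_num)]
    norm_num [Real.rpow_two]
  have h3a : (3 : ℝ) ^ a = 9 / 3 ^ t := by
    rw [show a = 2 - t by ring, Real.rpow_sub (by norm_num)]
    norm_num [Real.rpow_two]
  rw [h2a, h3a]
  -- key estimates via exp x > 1 + x
  have e1 : 1 + t * Real.log 2 < (2 : ℝ) ^ t := by
    have h := Real.add_one_lt_exp
      (ne_of_gt (mul_pos (Real.log_pos (by norm_num : (1:ℝ) < 2)) ht))
    rw [Real.rpow_def_of_pos (by norm_num : (0:ℝ) < 2)]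
    linarith [h]
  have e2 : 1 + t * Real.log (2 / 3) < ((2 : ℝ) / 3) ^ t := by
    have hlneg : Real.log (2 / 3 : ℝ) < 0 := Real.log_neg (by norm_num) (by norm_num)
    have h := Real.add_one_lt_exp (ne_of_lt (mul_neg_of_neg_of_pos hlneg ht))
    rw [Real.rpow_def_of_pos (by norm_num : (0:ℝ) < 2 / 3)]
    linarith [h]
  have hlog : 9 * Real.log 3 ≤ 16 * Real.log 2 := by
    have h1 : Real.log ((3 : ℝ) ^ (9 : ℕ)) ≤ Real.log ((2 : ℝ) ^ (16 : ℕ)) :=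
      (Real.log_le_log_iff (by positivity) (by positivity)).2 (by norm_num)
    rwa [Real.log_pow, Real.log_pow] at h1
  have hld : Real.log (2 / 3 : ℝ) = Real.log 2 - Real.log 3 :=
    Real.log_div (by norm_num) (by norm_num)
  have hkey : 16 < 7 * (2 : ℝ) ^ t + 9 * ((2 : ℝ) / 3) ^ t := by
    rw [hld] at e2
    have hmul : 0 ≤ t * (16 * Real.log 2 - 9 * Real.log 3) :=
      mul_nonneg ht.le (by linarith)
    nlinarith [e1, e2, hmul]
  have hdiv : ((2 : ℝ) / 3) ^ t = 2 ^ t / 3 ^ t :=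
    Real.div_rpow (by norm_num) (by norm_num) t
  rw [hdiv] at hkey
  rw [show (4 : ℝ) * (4 / 2 ^ t) = 16 / 2 ^ t by ring, div_lt_iff₀ h2t]
  have : ((7:ℝ) + 9 / (3:ℝ) ^ t) * (2:ℝ) ^ t = 7 * (2:ℝ) ^ t + 9 * ((2:ℝ) ^ t / (3:ℝ) ^ t) := by ring
  linarith [hkey, this.ge, this.le]

theorem rho_convex_sequence (H : ℝ) (hH : H ∈ Set.Ioo (1/2 : ℝ) 1)
    (ρ : ℕ → ℝ) (hρ0 : ρ 0 = 1)
    (hρ : ∀ k : ℕ, 1 ≤ k →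
      ρ k = (1/2) * (((k:ℝ)+1) ^ (2*H) - 2 * (k:ℝ) ^ (2*H) + ((k:ℝ)-1) ^ (2*H))) :
    ∀ k : ℕ, 1 ≤ k → ρ (k-1) - ρ k > ρ k - ρ (k+1) := by
  obtain ⟨hH1, hH2⟩ := hH
  set a : ℝ := 2 * H with ha_def
  have ha1 : 1 < a := by simp [ha_def]; linarith
  have ha2 : a < 2 := by simp [ha_def]; linarith
  intro k hk
  rcases eq_or_lt_of_le hk with h1 | h2
  · -- k = 1
    subst h1
    have hρ1 := hρ 1 le_rfl
    have hρ2 := hρ 2 (by norm_num)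
    have ha0 : a ≠ 0 := by intro h; rw [h] at ha1; linarith
    simp only [Nat.cast_one, Nat.cast_ofNat] at hρ1 hρ2
    rw [show ((1:ℝ) - 1) = 0 by norm_num, Real.one_rpow, Real.zero_rpow ha0] at hρ1
    rw [show ((2:ℝ) + 1) = 3 by norm_num, show ((2:ℝ) - 1) = 1 by norm_num,
      Real.one_rpow] at hρ2
    have hkey := key1 ha1 ha2
    show ρ 0 - ρ 1 > ρ 1 - ρ 2
    rw [hρ0, hρ1, hρ2]
    linarith
  · -- k ≥ 2
    have hk2 : 2 ≤ k := h2
    have hρk := hρ k hk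
    have hρk1 := hρ (k + 1) (by omega)
    have hρkm := hρ (k - 1) (by omega)
    have hcast : ((k - 1 : ℕ) : ℝ) = (k : ℝ) - 1 := by
      have : (1 : ℕ) ≤ k := hk
      push_cast [Nat.cast_sub this]
      ring
    rw [hcast] at hρkm
    push_cast at hρk1
    set x : ℝ := (k : ℝ) with hx_def
    have hx2 : (2 : ℝ) ≤ x := by simp only [hx_def]; exact_mod_cast hk2
    have hx1 : (1 : ℝ) < x := by linarith
    -- convexity of G
    have hconv := strictConvexOn_G ha1 ha2
    have hmid := hconv.2 (show x - 1 ∈ Set.Ici (1 : ℝ) by simp; linarith)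
      (show x + 1 ∈ Set.Ici (1 : ℝ) by simp; linarith)
      (show x - 1 ≠ x + 1 by intro h; linarith)
      (by norm_num : (0 : ℝ) < 1 / 2) (by norm_num : (0 : ℝ) < 1 / 2) (by norm_num)
    simp only [smul_eq_mul] at hmid
    rw [show (1 / 2 : ℝ) * (x - 1) + 1 / 2 * (x + 1) = x by ring] at hmid
    have r1 : x - 1 + 1 = x := by ring
    have r2 : x + 1 - 1 = x := by ring
    rw [r1] at hmid hρkm
    rw [r2] at hmid hρk1
    show ρ (k - 1) - ρ k > ρ k - ρ (k + 1)
    rw [hρkm, hρk, hρk1]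
    linarith [hmid]
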